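/- Let Γ_1 be a B×α matrix, Γ_2 a B×(k-1) matrix, and Γ_3 a B×α matrix over F_q, where B = kα, with all three matrices partitioned into k blocks of α rows each. Suppose: (i) the first block of Γ_1 is I_α and all other blocks of Γ_1 are zero; (ii) the first block of Γ_2 is zero; (iii) colspace(Γ_1) ⊆ colspace([Γ_2 | Γ_3]); and (iv) the first block of Γ_3 has rank α. Then colspace([Γ_1 | Γ_2]) = colspace([Γ_2 | Γ_3]). -/

import Mathlib

open Matrix in
/-- Rank argument for interference alignment:
`colspace [Γ₁ | Γ₂] = colspace [Γ₂ | Γ₃]`. -/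
theorem interference_alignment_colspace_eq
    {F : Type*} [Field F] [Fintype F] {k α : ℕ} (hk : 0 < k)
    (Γ₁ : Matrix (Fin k × Fin α) (Fin α) F)
    (Γ₂ : Matrix (Fin k × Fin α) (Fin (k - 1)) F)
    (Γ₃ : Matrix (Fin k × Fin α) (Fin α) F)
    (h1 : ∀ i a j, Γ₁ (i, a) j = if i = (⟨0, hk⟩ : Fin k) ∧ a = j then 1 else 0)
    (h2 : ∀ a j, Γ₂ ((⟨0, hk⟩ : Fin k), a) j = 0)
    (h3 : Submodule.span F (Set.range fun j => fun i => Γ₁ i j) ≤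
          Submodule.span F (Set.range fun j => fun i => (Matrix.fromCols Γ₂ Γ₃) i j))
    (h4 : (Matrix.of (fun a j => Γ₃ ((⟨0, hk⟩ : Fin k), a) j) :
        Matrix (Fin α) (Fin α) F).rank = α) :
    Submodule.span F (Set.range fun j => fun i => (Matrix.fromCols Γ₁ Γ₂) i j) =
      Submodule.span F (Set.range fun j => fun i => (Matrix.fromCols Γ₂ Γ₃) i j) := by
  classical
  -- rewrite column spans as ranges of mulVecLin
  have hr1 : (Set.range fun j => fun i => Γ₁ i j) = Set.range Γ₁.col := rfl
  have hr12 : (Set.range fun j => fun i => (Matrix.fromCols Γ₁ Γ₂) i j)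
      = Set.range (Matrix.fromCols Γ₁ Γ₂).col := rfl
  have hr23 : (Set.range fun j => fun i => (Matrix.fromCols Γ₂ Γ₃) i j)
      = Set.range (Matrix.fromCols Γ₂ Γ₃).col := rfl
  rw [hr12, hr23, ← Matrix.range_mulVecLin, ← Matrix.range_mulVecLin]
  rw [hr1, hr23, ← Matrix.range_mulVecLin, ← Matrix.range_mulVecLin] at h3
  -- extract the coefficient matrices X, Y with Γ₁ = Γ₂ * X + Γ₃ * Y
  have hcol : ∀ a : Fin α, ∃ w : (Fin (k - 1) ⊕ Fin α) → F,
      (Matrix.fromCols Γ₂ Γ₃) *ᵥ w = Γ₁ᵀ a := by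
    intro a
    have : Γ₁ᵀ a ∈ LinearMap.range (Matrix.mulVecLin Γ₁) :=
      ⟨Pi.single a 1, by rw [Matrix.mulVecLin_apply]; exact Matrix.mulVec_single_one ..⟩
    exact h3 this
  choose w hw using hcol
  set X : Matrix (Fin (k - 1)) (Fin α) F := fun j a => w a (Sum.inl j) with hX
  set Y : Matrix (Fin α) (Fin α) F := fun j a => w a (Sum.inr j) with hYdef
  have hwelim : ∀ a, w a = Sum.elim (fun j => X j a) (fun j => Y j a) := by
    intro a; funext s; cases s <;> rfl
  have hcols : ∀ a, Γ₂ *ᵥ (fun j => X j a) + Γ₃ *ᵥ (fun j => Y j a) = Γ₁ᵀ a := by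
    intro a
    rw [← Matrix.fromCols_mulVec_sumElim, ← hwelim, hw]
  have hmat : Γ₂ * X + Γ₃ * Y = Γ₁ := by
    ext i a
    have := congrFun (hcols a) i
    simpa [Matrix.mul_apply, Matrix.mulVec, dotProduct] using this
  -- the first block gives Γ₃⁰ * Y = 1, so Y is invertible
  have hY : (Matrix.of (fun a j => Γ₃ ((⟨0, hk⟩ : Fin k), a) j) :
      Matrix (Fin α) (Fin α) F) * Y = 1 := by
    ext a b
    have := congrFun (congrFun hmat ((⟨0, hk⟩ : Fin k), a)) b
    simp only [Matrix.add_apply, Matrix.mul_apply, h1, h2, zero_mul,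
      Finset.sum_const_zero, zero_add] at this
    simp only [Matrix.mul_apply, Matrix.of_apply, Matrix.one_apply, this]
    by_cases hab : a = b <;> simp [hab]
  haveI : Invertible Y := invertibleOfLeftInverse _ _ hY
  have hG3 : Γ₃ = (Γ₁ - Γ₂ * X) * ⅟Y := by
    have h' : Γ₁ - Γ₂ * X = Γ₃ * Y := by rw [← hmat, add_sub_cancel_left]
    rw [h', Matrix.mul_assoc, mul_invOf_self, Matrix.mul_one]
  have hG1 : Γ₁ = Γ₂ * X + Γ₃ * Y := hmat.symm
  -- prove the range equality
  apply le_antisymm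
  · rintro x ⟨v, rfl⟩
    refine ⟨Sum.elim (X *ᵥ (v ∘ Sum.inl) + v ∘ Sum.inr) (Y *ᵥ (v ∘ Sum.inl)), ?_⟩
    have hv : v = Sum.elim (v ∘ Sum.inl) (v ∘ Sum.inr) := by
      funext s; cases s <;> rfl
    simp only [Matrix.mulVecLin_apply, Matrix.fromCols_mulVec_sumElim]
    rw [hv, Matrix.fromCols_mulVec_sumElim]
    rw [hG1]
    simp only [Matrix.add_mulVec, Matrix.mulVec_add, ← Matrix.mulVec_mulVec,
      Sum.elim_comp_inl, Sum.elim_comp_inr]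
    abel
  · rintro x ⟨v, rfl⟩
    refine ⟨Sum.elim (⅟Y *ᵥ (v ∘ Sum.inr))
      (v ∘ Sum.inl - X *ᵥ (⅟Y *ᵥ (v ∘ Sum.inr))), ?_⟩
    have hv : v = Sum.elim (v ∘ Sum.inl) (v ∘ Sum.inr) := by
      funext s; cases s <;> rfl
    simp only [Matrix.mulVecLin_apply, Matrix.fromCols_mulVec_sumElim]
    rw [hv, Matrix.fromCols_mulVec_sumElim]
    rw [hG3]
    simp only [Matrix.sub_mulVec, Matrix.add_mulVec, Matrix.mulVec_add,
      Matrix.mulVec_sub, ← Matrix.mulVec_mulVec, Matrix.mul_assoc,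
      Sum.elim_comp_inl, Sum.elim_comp_inr]
    abel
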